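/- Let k be a field and Q = k[x,y,z,w]. For J = (x², xz, xw, xy−zw, z², axy+yz−w²) with a ∈ k, the elements zw², (w²−yz)w, and w⁴ all belong to J, and the colon ideal satisfies J : (w) = J + (x). -/

import Mathlib

open MvPolynomial

/-! Auxiliary model ring: the free `k[Y]`-module on `1, x, z, w` with the
multiplication table of `Q/J`. -/

@[ext]
structure Model (k : Type*) [Field k] (a : k) where
  p : Polynomial k
  q : Polynomial k
  r : Polynomial k
  s : Polynomial k

namespace Model

variable {k : Type*} [Field k] {a : k}

noncomputable instance : Zero (Model k a) := ⟨⟨0, 0, 0, 0⟩⟩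
noncomputable instance : One (Model k a) := ⟨⟨1, 0, 0, 0⟩⟩
noncomputable instance : Add (Model k a) := ⟨fun u v => ⟨u.p + v.p, u.q + v.q, u.r + v.r, u.s + v.s⟩⟩
noncomputable instance : Neg (Model k a) := ⟨fun u => ⟨-u.p, -u.q, -u.r, -u.s⟩⟩
noncomputable instance : Mul (Model k a) :=
  ⟨fun u v =>
    ⟨u.p * v.p,
     u.p * v.q + u.q * v.p + Polynomial.X * (u.r * v.s + u.s * v.r)
       + Polynomial.C a * Polynomial.X * (u.s * v.s),
     u.p * v.r + u.r * v.p + Polynomial.X * (u.s * v.s),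
     u.p * v.s + u.s * v.p⟩⟩

@[simp] lemma zero_def : (0 : Model k a) = ⟨0, 0, 0, 0⟩ := rfl
@[simp] lemma one_def : (1 : Model k a) = ⟨1, 0, 0, 0⟩ := rfl
@[simp] lemma add_def (u v : Model k a) :
    u + v = ⟨u.p + v.p, u.q + v.q, u.r + v.r, u.s + v.s⟩ := rfl
@[simp] lemma neg_def (u : Model k a) : -u = ⟨-u.p, -u.q, -u.r, -u.s⟩ := rfl
@[simp] lemma mul_def (u v : Model k a) :
    u * v = ⟨u.p * v.p,
     u.p * v.q + u.q * v.p + Polynomial.X * (u.r * v.s + u.s * v.r)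
       + Polynomial.C a * Polynomial.X * (u.s * v.s),
     u.p * v.r + u.r * v.p + Polynomial.X * (u.s * v.s),
     u.p * v.s + u.s * v.p⟩ := rfl

noncomputable instance : CommRing (Model k a) where
  add_assoc u v w := by ext : 1 <;> simp <;> ring
  zero_add u := by ext : 1 <;> simp
  add_zero u := by ext : 1 <;> simp
  add_comm u v := by ext : 1 <;> simp <;> ring
  neg_add_cancel u := by ext : 1 <;> simp
  mul_assoc u v w := by ext : 1 <;> simp <;> ring
  one_mul u := by ext : 1 <;> simp
  mul_one u := by ext : 1 <;> simp
  left_distrib u v w := by ext : 1 <;> simp <;> ring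
  right_distrib u v w := by ext : 1 <;> simp <;> ring
  zero_mul u := by ext : 1 <;> simp
  mul_zero u := by ext : 1 <;> simp
  mul_comm u v := by ext : 1 <;> simp <;> ring
  nsmul := nsmulRec
  zsmul := zsmulRec

@[simp] lemma sub_def (u v : Model k a) :
    u - v = ⟨u.p - v.p, u.q - v.q, u.r - v.r, u.s - v.s⟩ := by
  rw [sub_eq_add_neg]
  ext : 1 <;> simp [sub_eq_add_neg]

/-- The structure map `k → Model k a`. -/
noncomputable def algMap (k : Type*) [Field k] (a : k) : k →+* Model k a where
  toFun c := ⟨Polynomial.C c, 0, 0, 0⟩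
  map_one' := by ext : 1 <;> simp
  map_mul' x y := by ext : 1 <;> simp
  map_zero' := by ext : 1 <;> simp
  map_add' x y := by ext : 1 <;> simp

noncomputable instance : Algebra k (Model k a) := (algMap k a).toAlgebra

@[simp] lemma algebraMap_apply (c : k) :
    algebraMap k (Model k a) c = ⟨Polynomial.C c, 0, 0, 0⟩ := rfl

/-- Inclusion of `k[Y]` into the model as the first coordinate. -/
noncomputable def inc (k : Type*) [Field k] (a : k) : Polynomial k →ₐ[k] Model k a where
  toFun α := ⟨α, 0, 0, 0⟩
  map_one' := by ext : 1 <;> simp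
  map_mul' x y := by ext : 1 <;> simp
  map_zero' := by ext : 1 <;> simp
  map_add' x y := by ext : 1 <;> simp
  commutes' c := rfl

@[simp] lemma inc_apply (α : Polynomial k) : inc k a α = ⟨α, 0, 0, 0⟩ := rfl

end Model

section Main

variable {k : Type*} [Field k]

/-- The ideal `J` of case IIIc. -/
noncomputable def Jc (k : Type*) [Field k] (a : k) : Ideal (MvPolynomial (Fin 4) k) :=
  Ideal.span {X 0 ^ 2, X 0 * X 2, X 0 * X 3, X 0 * X 1 - X 2 * X 3, X 2 ^ 2,
    C a * X 0 * X 1 + X 1 * X 2 - X 3 ^ 2}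

/-- Embedding of `k[Y]` into `k[x,y,z,w]` via `Y ↦ y`. -/
noncomputable def Ev (k : Type*) [Field k] : Polynomial k →ₐ[k] MvPolynomial (Fin 4) k :=
  Polynomial.aeval (X 1)

/-- The quotient map to the model ring. -/
noncomputable def ψ (k : Type*) [Field k] (a : k) : MvPolynomial (Fin 4) k →ₐ[k] Model k a :=
  aeval ![⟨0, 1, 0, 0⟩, ⟨Polynomial.X, 0, 0, 0⟩, ⟨0, 0, 1, 0⟩, ⟨0, 0, 0, 1⟩]

lemma ψ_X0 (a : k) : ψ k a (X 0) = ⟨0, 1, 0, 0⟩ := by simp [ψ]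
lemma ψ_X1 (a : k) : ψ k a (X 1) = ⟨Polynomial.X, 0, 0, 0⟩ := by simp [ψ]
lemma ψ_X2 (a : k) : ψ k a (X 2) = ⟨0, 0, 1, 0⟩ := by simp [ψ]
lemma ψ_X3 (a : k) : ψ k a (X 3) = ⟨0, 0, 0, 1⟩ := by simp [ψ]

lemma ψ_Ev (a : k) (α : Polynomial k) : ψ k a (Ev k α) = ⟨α, 0, 0, 0⟩ := by
  have h : (ψ k a).comp (Ev k) = Model.inc k a := by
    apply Polynomial.algHom_ext
    simp [Ev, ψ]
  have := DFunLike.congr_fun h α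
  simpa using this

lemma ψ_J (a : k) : Jc k a ≤ RingHom.ker (ψ k a) := by
  rw [Jc, Ideal.span_le]
  rintro g hg
  simp only [Set.mem_insert_iff, Set.mem_singleton_iff] at hg
  rcases hg with rfl | rfl | rfl | rfl | rfl | rfl <;>
    · simp only [SetLike.mem_coe, RingHom.mem_ker, map_add, map_sub, map_mul, map_pow, ψ_X0, ψ_X1, ψ_X2, ψ_X3, aeval_C,
        Model.algebraMap_apply, pow_two, Model.mul_def, Model.add_def, Model.sub_def]
      ext : 1 <;> simp

/-- Linear independence of `1, x, z, w` over `k[y]` modulo `J`. -/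
lemma indep (a : k) (p q r s : Polynomial k)
    (h : Ev k p + Ev k q * X 0 + Ev k r * X 2 + Ev k s * X 3 ∈ Jc k a) :
    p = 0 ∧ q = 0 ∧ r = 0 ∧ s = 0 := by
  have h0 : ψ k a (Ev k p + Ev k q * X 0 + Ev k r * X 2 + Ev k s * X 3) = 0 := ψ_J a h
  rw [map_add, map_add, map_add, map_mul, map_mul, map_mul, ψ_Ev, ψ_Ev, ψ_Ev, ψ_Ev,
    ψ_X0, ψ_X2, ψ_X3] at h0
  have h1 : (⟨p, q, r, s⟩ : Model k a) = 0 := by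
    rw [← h0]; ext <;> simp
  rw [Model.zero_def, Model.mk.injEq] at h1
  exact ⟨h1.1, h1.2.1, h1.2.2.1, h1.2.2.2⟩

/-- Normal form modulo `J`. -/
lemma nf (a : k) (f : MvPolynomial (Fin 4) k) :
    ∃ p q r s : Polynomial k,
      f - (Ev k p + Ev k q * X 0 + Ev k r * X 2 + Ev k s * X 3) ∈ Jc k a := by
  have hx2 : (X 0 ^ 2 : MvPolynomial (Fin 4) k) ∈ Jc k a :=
    Ideal.subset_span (by simp [Jc])
  have hxz : (X 0 * X 2 : MvPolynomial (Fin 4) k) ∈ Jc k a :=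
    Ideal.subset_span (by simp [Jc])
  have hxw : (X 0 * X 3 : MvPolynomial (Fin 4) k) ∈ Jc k a :=
    Ideal.subset_span (by simp [Jc])
  have hxy : (X 0 * X 1 - X 2 * X 3 : MvPolynomial (Fin 4) k) ∈ Jc k a :=
    Ideal.subset_span (by simp [Jc])
  have hz2 : (X 2 ^ 2 : MvPolynomial (Fin 4) k) ∈ Jc k a :=
    Ideal.subset_span (by simp [Jc])
  have hw2 : (C a * X 0 * X 1 + X 1 * X 2 - X 3 ^ 2 : MvPolynomial (Fin 4) k) ∈ Jc k a :=
    Ideal.subset_span (by simp [Jc])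
  induction f using MvPolynomial.induction_on with
  | C c =>
      refine ⟨Polynomial.C c, 0, 0, 0, ?_⟩
      simp [Ev]
  | add f g hf hg =>
      obtain ⟨p1, q1, r1, s1, h1⟩ := hf
      obtain ⟨p2, q2, r2, s2, h2⟩ := hg
      refine ⟨p1 + p2, q1 + q2, r1 + r2, s1 + s2, ?_⟩
      have := (Jc k a).add_mem h1 h2
      convert this using 1
      simp only [map_add]
      ring
  | mul_X f i hf =>
      obtain ⟨p, q, r, s, hfm⟩ := hf
      have key : ∀ (p' q' r' s' : Polynomial k),
          ((Ev k p + Ev k q * X 0 + Ev k r * X 2 + Ev k s * X 3) * X i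
            - (Ev k p' + Ev k q' * X 0 + Ev k r' * X 2 + Ev k s' * X 3) ∈ Jc k a) →
          f * X i - (Ev k p' + Ev k q' * X 0 + Ev k r' * X 2 + Ev k s' * X 3) ∈ Jc k a := by
        intro p' q' r' s' hmem
        have h1 := (Jc k a).add_mem ((Jc k a).mul_mem_right (X i) hfm) hmem
        convert h1 using 1
        ring
      fin_cases i
      · -- multiply by x
        refine ⟨0, p, 0, 0, key 0 p 0 0 ?_⟩
        show (Ev k p + Ev k q * X 0 + Ev k r * X 2 + Ev k s * X 3) * X 0
            - (Ev k 0 + Ev k p * X 0 + Ev k 0 * X 2 + Ev k 0 * X 3) ∈ Jc k a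
        have : (Ev k p + Ev k q * X 0 + Ev k r * X 2 + Ev k s * X 3) * X 0
            - (Ev k 0 + Ev k p * X 0 + Ev k 0 * X 2 + Ev k 0 * X 3)
            = Ev k q * X 0 ^ 2 + Ev k r * (X 0 * X 2) + Ev k s * (X 0 * X 3) := by
          simp only [map_zero]; ring
        rw [this]
        exact Ideal.add_mem _ (Ideal.add_mem _ (Ideal.mul_mem_left _ _ hx2)
          (Ideal.mul_mem_left _ _ hxz)) (Ideal.mul_mem_left _ _ hxw)
      · -- multiply by y
        refine ⟨p * Polynomial.X, q * Polynomial.X, r * Polynomial.X, s * Polynomial.X,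
          key _ _ _ _ ?_⟩
        show (Ev k p + Ev k q * X 0 + Ev k r * X 2 + Ev k s * X 3) * X 1
            - (Ev k (p * Polynomial.X) + Ev k (q * Polynomial.X) * X 0
              + Ev k (r * Polynomial.X) * X 2 + Ev k (s * Polynomial.X) * X 3) ∈ Jc k a
        have : (Ev k p + Ev k q * X 0 + Ev k r * X 2 + Ev k s * X 3) * X 1
            - (Ev k (p * Polynomial.X) + Ev k (q * Polynomial.X) * X 0
              + Ev k (r * Polynomial.X) * X 2 + Ev k (s * Polynomial.X) * X 3) = 0 := by
          simp only [map_mul, Ev, Polynomial.aeval_X]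
          ring
        rw [this]; exact (Jc k a).zero_mem
      · -- multiply by z
        refine ⟨0, s * Polynomial.X, p, 0, key _ _ _ _ ?_⟩
        show (Ev k p + Ev k q * X 0 + Ev k r * X 2 + Ev k s * X 3) * X 2
            - (Ev k 0 + Ev k (s * Polynomial.X) * X 0 + Ev k p * X 2 + Ev k 0 * X 3) ∈ Jc k a
        have : (Ev k p + Ev k q * X 0 + Ev k r * X 2 + Ev k s * X 3) * X 2
            - (Ev k 0 + Ev k (s * Polynomial.X) * X 0 + Ev k p * X 2 + Ev k 0 * X 3)
            = Ev k q * (X 0 * X 2) + Ev k r * X 2 ^ 2 - Ev k s * (X 0 * X 1 - X 2 * X 3) := by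
          simp only [map_zero, map_mul, Ev, Polynomial.aeval_X]
          ring
        rw [this]
        exact Ideal.sub_mem _ (Ideal.add_mem _ (Ideal.mul_mem_left _ _ hxz)
          (Ideal.mul_mem_left _ _ hz2)) (Ideal.mul_mem_left _ _ hxy)
      · -- multiply by w
        refine ⟨0, (r + Polynomial.C a * s) * Polynomial.X, s * Polynomial.X, p,
          key _ _ _ _ ?_⟩
        show (Ev k p + Ev k q * X 0 + Ev k r * X 2 + Ev k s * X 3) * X 3
            - (Ev k 0 + Ev k ((r + Polynomial.C a * s) * Polynomial.X) * X 0
              + Ev k (s * Polynomial.X) * X 2 + Ev k p * X 3) ∈ Jc k a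
        have : (Ev k p + Ev k q * X 0 + Ev k r * X 2 + Ev k s * X 3) * X 3
            - (Ev k 0 + Ev k ((r + Polynomial.C a * s) * Polynomial.X) * X 0
              + Ev k (s * Polynomial.X) * X 2 + Ev k p * X 3)
            = Ev k q * (X 0 * X 3) - Ev k r * (X 0 * X 1 - X 2 * X 3)
              - Ev k s * (C a * X 0 * X 1 + X 1 * X 2 - X 3 ^ 2) := by
          simp only [map_zero, map_mul, map_add, Ev, Polynomial.aeval_X, Polynomial.aeval_C,
            MvPolynomial.algebraMap_eq]
          ring
        rw [this]
        exact Ideal.sub_mem _ (Ideal.sub_mem _ (Ideal.mul_mem_left _ _ hxw)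
          (Ideal.mul_mem_left _ _ hxy)) (Ideal.mul_mem_left _ _ hw2)

lemma colon_eq (a : k) :
    (Jc k a).colon (Ideal.span {(X 3 : MvPolynomial (Fin 4) k)}) = Jc k a ⊔ Ideal.span {(X 0 : MvPolynomial (Fin 4) k)} := by
  have hxw : (X 0 * X 3 : MvPolynomial (Fin 4) k) ∈ Jc k a :=
    Ideal.subset_span (by simp [Jc])
  have hxy : (X 0 * X 1 - X 2 * X 3 : MvPolynomial (Fin 4) k) ∈ Jc k a :=
    Ideal.subset_span (by simp [Jc])
  have hw2 : (C a * X 0 * X 1 + X 1 * X 2 - X 3 ^ 2 : MvPolynomial (Fin 4) k) ∈ Jc k a :=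
    Ideal.subset_span (by simp [Jc])
  apply le_antisymm
  · intro f hf
    have hfw : f * X 3 ∈ Jc k a := Ideal.mem_colon_span_singleton.mp hf
    obtain ⟨p, q, r, s, hd⟩ := nf a f
    set NF : MvPolynomial (Fin 4) k :=
      Ev k p + Ev k q * X 0 + Ev k r * X 2 + Ev k s * X 3 with hNF
    have h2 : NF * X 3 ∈ Jc k a := by
      have h1 : (f - NF) * X 3 ∈ Jc k a := (Jc k a).mul_mem_right _ hd
      have : NF * X 3 = f * X 3 - (f - NF) * X 3 := by ring
      rw [this]; exact Ideal.sub_mem _ hfw h1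
    have h3 : NF * X 3
        - (Ev k 0 + Ev k ((r + Polynomial.C a * s) * Polynomial.X) * X 0
          + Ev k (s * Polynomial.X) * X 2 + Ev k p * X 3)
        = Ev k q * (X 0 * X 3) - Ev k r * (X 0 * X 1 - X 2 * X 3)
          - Ev k s * (C a * X 0 * X 1 + X 1 * X 2 - X 3 ^ 2) := by
      simp only [hNF, map_zero, map_mul, map_add, Ev, Polynomial.aeval_X, Polynomial.aeval_C,
        MvPolynomial.algebraMap_eq]
      ring
    have h4 : Ev k 0 + Ev k ((r + Polynomial.C a * s) * Polynomial.X) * X 0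
        + Ev k (s * Polynomial.X) * X 2 + Ev k p * X 3 ∈ Jc k a := by
      have h5 : NF * X 3 - (Ev k 0 + Ev k ((r + Polynomial.C a * s) * Polynomial.X) * X 0
          + Ev k (s * Polynomial.X) * X 2 + Ev k p * X 3) ∈ Jc k a := by
        rw [h3]
        exact Ideal.sub_mem _ (Ideal.sub_mem _ (Ideal.mul_mem_left _ _ hxw)
          (Ideal.mul_mem_left _ _ hxy)) (Ideal.mul_mem_left _ _ hw2)
      have := Ideal.sub_mem _ h2 h5
      simpa using this
    obtain ⟨-, hq', hr', hs'⟩ := indep a _ _ _ _ h4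
    have hs : s = 0 := by
      rcases mul_eq_zero.mp hr' with h | h
      · exact h
      · exact absurd h Polynomial.X_ne_zero
    have hr : r = 0 := by
      rw [hs, mul_zero, add_zero] at hq'
      rcases mul_eq_zero.mp hq' with h | h
      · exact h
      · exact absurd h Polynomial.X_ne_zero
    have hfe : f = (f - NF) + (Ev k q * X 0 + (Ev k p + Ev k r * X 2 + Ev k s * X 3)) := by
      rw [hNF]; ring
    rw [hfe]
    refine Ideal.add_mem _ (Ideal.mem_sup_left hd) ?_
    refine Ideal.add_mem _ ?_ ?_
    · exact Ideal.mem_sup_right (Ideal.mul_mem_left _ _ (Ideal.subset_span rfl))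
    · rw [hs', hr, hs]
      simp
  · apply sup_le
    · intro f hf
      exact Ideal.mem_colon_span_singleton.mpr ((Jc k a).mul_mem_right _ hf)
    · rw [Ideal.span_le]
      rintro g rfl
      exact Ideal.mem_colon_span_singleton.mpr hxw

end Main

/-- case IIIc: memberships `zw², (w²−yz)w, w⁴ ∈ J` and `J : (w) = J + (x)`. -/
theorem stmt_15 (k : Type*) [Field k] (a : k) :
    let x : MvPolynomial (Fin 4) k := X 0
    let y : MvPolynomial (Fin 4) k := X 1
    let z : MvPolynomial (Fin 4) k := X 2
    let w : MvPolynomial (Fin 4) k := X 3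
    let J : Ideal (MvPolynomial (Fin 4) k) :=
      Ideal.span {x ^ 2, x * z, x * w, x * y - z * w, z ^ 2,
                  C a * x * y + y * z - w ^ 2}
    z * w ^ 2 ∈ J ∧ (w ^ 2 - y * z) * w ∈ J ∧ w ^ 4 ∈ J ∧
      J.colon (Ideal.span {w}) = J ⊔ Ideal.span {x} := by
  intro x y z w J
  have hJ : J = Jc k a := rfl
  have hxw : x * w ∈ J := Ideal.subset_span (by simp)
  have hxy : x * y - z * w ∈ J := Ideal.subset_span (by simp)
  have hw2 : C a * x * y + y * z - w ^ 2 ∈ J := Ideal.subset_span (by simp)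
  have m1 : z * w ^ 2 ∈ J := by
    have : z * w ^ 2 = y * (x * w) - w * (x * y - z * w) := by ring
    rw [this]
    exact Ideal.sub_mem _ (Ideal.mul_mem_left _ _ hxw) (Ideal.mul_mem_left _ _ hxy)
  have m2 : (w ^ 2 - y * z) * w ∈ J := by
    have h : (w ^ 2 - y * z) * w = (C a * y) * (x * w) - w * (C a * x * y + y * z - w ^ 2) := by
      ring
    rw [h]
    exact Ideal.sub_mem _ (Ideal.mul_mem_left _ _ hxw) (Ideal.mul_mem_left _ _ hw2)
  have m3 : w ^ 4 ∈ J := by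
    have h : w ^ 4 = (C a * y * w) * (x * w) + y * (z * w ^ 2)
        - w ^ 2 * (C a * x * y + y * z - w ^ 2) := by ring
    rw [h]
    exact Ideal.sub_mem _ (Ideal.add_mem _ (Ideal.mul_mem_left _ _ hxw)
      (Ideal.mul_mem_left _ _ m1)) (Ideal.mul_mem_left _ _ hw2)
  exact ⟨m1, m2, m3, hJ ▸ colon_eq a⟩
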